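/- Let p be an odd prime and ρ : G → GL_n(ℤ_p) a continuous representation of a profinite group G, with Φ_m(ρ) the filtration subquotients viewed inside M_n(𝔽_p). If Φ_m(ρ) contains sl_n(𝔽_p) for some m ≥ 1, then Φ_k(ρ) contains sl_n(𝔽_p) for all k ≥ m. -/

import Mathlib

open Matrix

/-- Entrywise reduction of `p`-adic integer matrices modulo `p^m`. -/
noncomputable def red (p : ℕ) [Fact p.Prime] (n m : ℕ) :
    Matrix (Fin n) (Fin n) ℤ_[p] →+* Matrix (Fin n) (Fin n) (ZMod (p ^ m)) :=
  (PadicInt.toZModPow m).mapMatrix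

/-- Entrywise lift of a matrix over `𝔽_p` to a matrix over `ℤ/p^m` via `ZMod.val`. -/
def mlift (p : ℕ) {n : ℕ} (m : ℕ) (X : Matrix (Fin n) (Fin n) (ZMod p)) :
    Matrix (Fin n) (Fin n) (ZMod (p ^ m)) :=
  X.map fun x => (x.val : ZMod (p ^ m))

/-- `Φ_m(ρ)`: the image of `ker ρ_m` under `ρ_{m+1}`, viewed in `M_n(𝔽_p)`. -/
noncomputable def Phi (p : ℕ) [Fact p.Prime] {n : ℕ} {G : Type*} [Group G]
    (ρ : G →* GL (Fin n) ℤ_[p]) (m : ℕ) : Set (Matrix (Fin n) (Fin n) (ZMod p)) :=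
  {X | ∃ g : G, red p n m (ρ g).val = 1 ∧
    red p n (m + 1) (ρ g).val = 1 + (p : ZMod (p ^ (m + 1))) ^ m • mlift p (m + 1) X}

section Aux

variable (p : ℕ) [Fact p.Prime] {n : ℕ}

lemma red_smul (s : ℕ) (c : ℤ_[p]) (M : Matrix (Fin n) (Fin n) ℤ_[p]) :
    red p n s (c • M) = PadicInt.toZModPow s c • red p n s M := by
  ext i j
  simp only [red, RingHom.mapMatrix_apply, Matrix.map_apply, Matrix.smul_apply, smul_eq_mul,
    _root_.map_mul]

lemma red_lift (s : ℕ) (X : Matrix (Fin n) (Fin n) (ZMod p)) :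
    red p n s (X.map fun x => ((x.val : ℕ) : ℤ_[p])) = mlift p s X := by
  ext i j
  simp only [red, mlift, RingHom.mapMatrix_apply, Matrix.map_apply, map_natCast]

lemma red_cast (s t : ℕ) (h : s ≤ t) (M : Matrix (Fin n) (Fin n) ℤ_[p]) :
    (ZMod.castHom (pow_dvd_pow p h) (ZMod (p ^ s))).mapMatrix (red p n t M) = red p n s M := by
  ext i j
  simp only [red, RingHom.mapMatrix_apply, Matrix.map_apply]
  rw [← RingHom.comp_apply, PadicInt.zmod_cast_comp_toZModPow s t h]

lemma cast_mlift (s t : ℕ) (h : s ≤ t) (X : Matrix (Fin n) (Fin n) (ZMod p)) :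
    (ZMod.castHom (pow_dvd_pow p h) (ZMod (p ^ s))).mapMatrix (mlift p t X) = mlift p s X := by
  ext i j
  simp only [mlift, RingHom.mapMatrix_apply, Matrix.map_apply, map_natCast]

lemma mapMatrix_smul' {R S : Type*} [CommSemiring R] [CommSemiring S] (f : R →+* S)
    (c : R) (M : Matrix (Fin n) (Fin n) R) :
    f.mapMatrix (c • M) = f c • f.mapMatrix M := by
  ext i j
  simp only [RingHom.mapMatrix_apply, Matrix.map_apply, Matrix.smul_apply, smul_eq_mul,
    _root_.map_mul]

lemma natCast_matrix_eq_smul_one {R : Type*} [CommRing R] (c : ℕ) :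
    ((c : ℕ) : Matrix (Fin n) (Fin n) R) = (c : R) • (1 : Matrix (Fin n) (Fin n) R) := by
  rw [Matrix.smul_one_eq_diagonal, ← Matrix.diagonal_natCast]

lemma key (hp : Odd p) (m : ℕ) (hm : 1 ≤ m) (A : Matrix (Fin n) (Fin n) ℤ_[p])
    (X : Matrix (Fin n) (Fin n) (ZMod p))
    (h : red p n (m + 1) A = 1 + (p : ZMod (p ^ (m + 1))) ^ m • mlift p (m + 1) X) :
    red p n (m + 2) (A ^ p) = 1 + (p : ZMod (p ^ (m + 2))) ^ (m + 1) • mlift p (m + 2) X := by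
  have hp3 : 3 ≤ p := by
    rcases hp with ⟨t, ht⟩
    have h2 := (Fact.out : p.Prime).two_le
    omega
  set L : Matrix (Fin n) (Fin n) ℤ_[p] := X.map fun x => ((x.val : ℕ) : ℤ_[p]) with hLdef
  have hker : red p n (m + 1) (A - (1 + (p : ℤ_[p]) ^ m • L)) = 0 := by
    rw [map_sub, map_add, _root_.map_one, red_smul, red_lift, map_pow, map_natCast, ← h,
      sub_self]
  have hdvd : ∀ i j, (p : ℤ_[p]) ^ (m + 1) ∣ (A - (1 + (p : ℤ_[p]) ^ m • L)) i j := by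
    intro i j
    have h0 : PadicInt.toZModPow (m + 1) ((A - (1 + (p : ℤ_[p]) ^ m • L)) i j) = 0 := by
      have := congrFun (congrFun (congrArg (fun M => M) hker) i) j
      simpa [red, Matrix.map_apply] using this
    have hmem : (A - (1 + (p : ℤ_[p]) ^ m • L)) i j ∈
        RingHom.ker (PadicInt.toZModPow (m + 1) : ℤ_[p] →+* ZMod (p ^ (m + 1))) := h0
    rw [PadicInt.ker_toZModPow, Ideal.mem_span_singleton] at hmem
    exact hmem
  set E : Matrix (Fin n) (Fin n) ℤ_[p] := fun i j => (hdvd i j).choose with hEdef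
  have hA : A = 1 + (p : ℤ_[p]) ^ m • (L + (p : ℤ_[p]) • E) := by
    ext i j
    have hspec : (A - (1 + (p : ℤ_[p]) ^ m • L)) i j = (p : ℤ_[p]) ^ (m + 1) * E i j :=
      (hdvd i j).choose_spec
    simp only [Matrix.sub_apply, Matrix.add_apply, Matrix.smul_apply, smul_eq_mul] at hspec ⊢
    rw [sub_eq_iff_eq_add] at hspec
    rw [hspec]
    ring
  set D : Matrix (Fin n) (Fin n) ℤ_[p] := L + (p : ℤ_[p]) • E with hDdef
  have hcomm : Commute ((p : ℤ_[p]) ^ m • D) (1 : Matrix (Fin n) (Fin n) ℤ_[p]) :=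
    Commute.one_right _
  have hbin : A ^ p = ∑ k ∈ Finset.range (p + 1),
      ((p : ℤ_[p]) ^ m • D) ^ k * 1 ^ (p - k) * (p.choose k : Matrix (Fin n) (Fin n) ℤ_[p]) := by
    rw [hA, add_comm]
    exact hcomm.add_pow p
  set F : ℕ → Matrix (Fin n) (Fin n) (ZMod (p ^ (m + 2))) := fun k => red p n (m + 2)
      (((p : ℤ_[p]) ^ m • D) ^ k * 1 ^ (p - k) * (p.choose k : Matrix (Fin n) (Fin n) ℤ_[p]))
    with hFdef
  have hred : red p n (m + 2) (A ^ p) = ∑ k ∈ Finset.range (p + 1), F k := by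
    rw [hbin, map_sum]
  have hterm : ∀ k, F k = ((p : ZMod (p ^ (m + 2))) ^ (m * k)
      * (p.choose k : ZMod (p ^ (m + 2)))) • (red p n (m + 2) D) ^ k := by
    intro k
    rw [hFdef]
    simp only
    rw [one_pow, mul_one, _root_.map_mul, smul_pow, ← pow_mul, red_smul, map_pow, map_natCast,
      map_pow, map_natCast, natCast_matrix_eq_smul_one, mul_smul_comm, mul_one, smul_smul,
      mul_comm]
  have hD : red p n (m + 2) D = mlift p (m + 2) X
      + (p : ZMod (p ^ (m + 2))) • red p n (m + 2) E := by
    rw [hDdef, map_add, red_lift, red_smul, map_natCast]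
  have hpz : (p : ZMod (p ^ (m + 2))) ^ (m + 2) = 0 := by
    rw [← Nat.cast_pow, ZMod.natCast_self]
  have hzero : ∀ k ∈ Finset.Ico 2 (p + 1), F k = 0 := by
    intro k hk
    rw [Finset.mem_Ico] at hk
    rw [hterm k]
    have hdvd2 : (p : ℕ) ^ (m + 2) ∣ p ^ (m * k) * p.choose k := by
      by_cases hle : m + 2 ≤ m * k
      · exact Dvd.dvd.mul_right (pow_dvd_pow p hle) _
      · have ha : m * 2 ≤ m * k := Nat.mul_le_mul_left m hk.1
        have hb : m * k < m + 2 := Nat.lt_of_not_le hle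
        have hm2 : m < 2 := by nlinarith
        have hm1 : m = 1 := by omega
        subst hm1
        have hk2 : k = 2 := by omega
        subst hk2
        have hpc : p ∣ p.choose 2 :=
          Nat.Prime.dvd_choose_self (Fact.out) (by norm_num) (by omega)
        obtain ⟨c, hc⟩ := hpc
        exact ⟨c, by rw [hc]; ring⟩
    have hsc : (p : ZMod (p ^ (m + 2))) ^ (m * k) * (p.choose k : ZMod (p ^ (m + 2))) = 0 := by
      have hz : ((p ^ (m * k) * p.choose k : ℕ) : ZMod (p ^ (m + 2))) = 0 := by
        rw [ZMod.natCast_eq_zero_iff]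
        exact hdvd2
      push_cast at hz
      exact hz
    rw [hsc, zero_smul]
  have hsum : ∑ k ∈ Finset.range (p + 1), F k = F 0 + F 1 := by
    calc ∑ k ∈ Finset.range (p + 1), F k = ∑ k ∈ Finset.Ico 0 (p + 1), F k := by
          rw [Finset.range_eq_Ico]
      _ = ∑ k ∈ Finset.Ico 0 2, F k + ∑ k ∈ Finset.Ico 2 (p + 1), F k :=
          (Finset.sum_Ico_consecutive F (by omega) (by omega)).symm
      _ = ∑ k ∈ Finset.Ico 0 2, F k := by rw [Finset.sum_eq_zero hzero, add_zero]
      _ = F 0 + F 1 := by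
          rw [← Finset.range_eq_Ico, Finset.sum_range_succ, Finset.sum_range_one]
  rw [hred, hsum, hterm 0, hterm 1, hD]
  simp only [Nat.mul_zero, pow_zero, one_mul, Nat.choose_zero_right, Nat.cast_one, mul_one,
    Nat.choose_one_right, one_smul, pow_one, Nat.mul_one]
  rw [smul_add, smul_smul]
  have e1 : (p : ZMod (p ^ (m + 2))) ^ m * (p : ZMod (p ^ (m + 2)))
      = (p : ZMod (p ^ (m + 2))) ^ (m + 1) := by ring
  have e2 : (p : ZMod (p ^ (m + 2))) ^ m * (p : ZMod (p ^ (m + 2))) * (p : ZMod (p ^ (m + 2)))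
      = 0 := by
    have e3 : (p : ZMod (p ^ (m + 2))) ^ m * (p : ZMod (p ^ (m + 2))) * (p : ZMod (p ^ (m + 2)))
        = (p : ZMod (p ^ (m + 2))) ^ (m + 2) := by ring
    rw [e3, hpz]
  rw [e2, zero_smul, add_zero, e1]

lemma phi_step {G : Type*} [Group G] (hp : Odd p) (ρ : G →* GL (Fin n) ℤ_[p]) (m : ℕ)
    (hm : 1 ≤ m) (X : Matrix (Fin n) (Fin n) (ZMod p)) (hX : X ∈ Phi p ρ m) :
    X ∈ Phi p ρ (m + 1) := by
  obtain ⟨g, -, h2⟩ := hX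
  have hval : ((ρ (g ^ p)) : Matrix (Fin n) (Fin n) ℤ_[p])
      = ((ρ g) : Matrix (Fin n) (Fin n) ℤ_[p]) ^ p := by
    rw [map_pow, Units.val_pow_eq_pow_val]
  have hk := key p hp m hm _ X h2
  have hle : m + 1 ≤ m + 2 := by omega
  refine ⟨g ^ p, ?_, ?_⟩
  · rw [hval, ← red_cast p (m + 1) (m + 2) hle, hk, map_add, _root_.map_one,
      mapMatrix_smul', cast_mlift, map_pow, map_natCast]
    have hz : (p : ZMod (p ^ (m + 1))) ^ (m + 1) = 0 := by
      rw [← Nat.cast_pow, ZMod.natCast_self]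
    rw [hz, zero_smul, add_zero]
    omega
  · show red p n (m + 1 + 1) _ = _
    rw [hval]
    exact hk

end Aux

/-- if `Φ_m(ρ)` contains `sl_n(𝔽_p)` then so does `Φ_k(ρ)` for all `k ≥ m`. -/
theorem stmt_10 (p : ℕ) [Fact p.Prime] (hp : Odd p) {n : ℕ} {G : Type*} [Group G]
    [TopologicalSpace G] [IsTopologicalGroup G] [CompactSpace G] [TotallyDisconnectedSpace G]
    (ρ : G →* GL (Fin n) ℤ_[p]) (hρ : Continuous fun g => ρ g)
    (m : ℕ) (hm : 1 ≤ m)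
    (hsl : ∀ X : Matrix (Fin n) (Fin n) (ZMod p), X.trace = 0 → X ∈ Phi p ρ m) :
    ∀ k, m ≤ k → ∀ X : Matrix (Fin n) (Fin n) (ZMod p), X.trace = 0 → X ∈ Phi p ρ k := by
  intro k hk
  induction k, hk using Nat.le_induction with
  | base => exact hsl
  | succ j hj ih =>
    intro X hX
    exact phi_step p hp ρ j (le_trans hm hj) X (ih X hX)
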